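/- (Change of occupancy measure for total-variation errors.) Let S be a finite state space, 𝒜 a finite action set, H ∈ ℕ, and d₀ an initial distribution on S. Let P and P̂ be two transition models and define r_h(s,a) := ‖P_h(·|s,a) − P̂_h(·|s,a)‖_TV (so 0 ≤ r_h(s,a) ≤ 2). Then for every policy π: Σ_{h=0}^{H−1} Σ_{(s,a)} d^π_{P;h}(s,a) · r_h(s,a) ≤ (2H+1) · Σ_{h=0}^{H−1} Σ_{(s,a)} d^π_{P̂;h}(s,a) · r_h(s,a). -/
import Mathlib


/-! Change of occupancy measure for total-variation errors. -/

noncomputable section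

open Finset

/-- `p` is a probability distribution on the finite type `X`. -/
def IsDist {X : Type*} [Fintype X] (p : X → ℝ) : Prop :=
  (∀ x, 0 ≤ p x) ∧ (∑ x, p x) = 1

variable {S Act : Type*} [Fintype S] [Fintype Act]

/-- Occupancy measure `d^π_{P;h}(s,a)`: the probability that, executing the policy `π`
in the transition model `P` starting from `d0`, the state-action pair at step `h`
is `(s,a)`. -/
def occ (d0 : S → ℝ) (π : ℕ → S → Act → ℝ) (P : ℕ → S → Act → S → ℝ) :
    ℕ → S → Act → ℝ
  | 0 => fun s a => d0 s * π 0 s a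
  | h + 1 => fun s' a' => (∑ s, ∑ a, occ d0 π P h s a * P h s a s') * π (h + 1) s' a'

lemma occ_nonneg (d0 : S → ℝ) (hd0 : IsDist d0)
    (π : ℕ → S → Act → ℝ) (hπ : ∀ h s, IsDist (π h s))
    (P : ℕ → S → Act → S → ℝ) (hP : ∀ h s a, IsDist (P h s a)) :
    ∀ h s a, 0 ≤ occ d0 π P h s a := by
  intro h
  induction h with
  | zero => intro s a; exact mul_nonneg (hd0.1 s) ((hπ 0 s).1 a)
  | succ h ih =>
    intro s' a'
    refine mul_nonneg ?_ ((hπ (h+1) s').1 a')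
    exact Finset.sum_nonneg fun s _ => Finset.sum_nonneg fun a _ =>
      mul_nonneg (ih s a) ((hP h s a).1 s')

lemma occ_l1 (d0 : S → ℝ) (hd0 : IsDist d0)
    (π : ℕ → S → Act → ℝ) (hπ : ∀ h s, IsDist (π h s))
    (P Phat : ℕ → S → Act → S → ℝ)
    (hP : ∀ h s a, IsDist (P h s a)) (hPhat : ∀ h s a, IsDist (Phat h s a)) :
    ∀ h, ∑ s, ∑ a, |occ d0 π P h s a - occ d0 π Phat h s a|
      ≤ ∑ g ∈ Finset.range h, ∑ s, ∑ a, occ d0 π Phat g s a *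
          (∑ s', |P g s a s' - Phat g s a s'|) := by
  intro h
  induction h with
  | zero => simp [occ]
  | succ h ih =>
    rw [Finset.sum_range_succ]
    have key : ∑ s', ∑ a', |occ d0 π P (h+1) s' a' - occ d0 π Phat (h+1) s' a'|
        ≤ (∑ s, ∑ a, |occ d0 π P h s a - occ d0 π Phat h s a|)
          + ∑ s, ∑ a, occ d0 π Phat h s a * (∑ s', |P h s a s' - Phat h s a s'|) := by
      have step : ∀ s' a', |occ d0 π P (h+1) s' a' - occ d0 π Phat (h+1) s' a'|
          = |(∑ s, ∑ a, (occ d0 π P h s a * P h s a s'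
               - occ d0 π Phat h s a * Phat h s a s'))| * π (h+1) s' a' := by
        intro s' a'
        show |(∑ s, ∑ a, occ d0 π P h s a * P h s a s') * π (h + 1) s' a'
            - (∑ s, ∑ a, occ d0 π Phat h s a * Phat h s a s') * π (h + 1) s' a'| = _
        rw [← sub_mul, abs_mul, abs_of_nonneg ((hπ (h+1) s').1 a')]
        simp_rw [← Finset.sum_sub_distrib]
      calc ∑ s', ∑ a', |occ d0 π P (h+1) s' a' - occ d0 π Phat (h+1) s' a'|
          = ∑ s', |(∑ s, ∑ a, (occ d0 π P h s a * P h s a s'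
               - occ d0 π Phat h s a * Phat h s a s'))| := by
            refine Finset.sum_congr rfl fun s' _ => ?_
            simp_rw [step s']
            rw [← Finset.mul_sum, (hπ (h+1) s').2, mul_one]
        _ ≤ ∑ s', ∑ s, ∑ a, ((|occ d0 π P h s a - occ d0 π Phat h s a|) * P h s a s'
              + occ d0 π Phat h s a * |P h s a s' - Phat h s a s'|) := by
            refine Finset.sum_le_sum fun s' _ => ?_
            refine le_trans (Finset.abs_sum_le_sum_abs _ _) ?_
            refine Finset.sum_le_sum fun s _ => ?_
            refine le_trans (Finset.abs_sum_le_sum_abs _ _) ?_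
            refine Finset.sum_le_sum fun a _ => ?_
            have : occ d0 π P h s a * P h s a s' - occ d0 π Phat h s a * Phat h s a s'
                = (occ d0 π P h s a - occ d0 π Phat h s a) * P h s a s'
                  + occ d0 π Phat h s a * (P h s a s' - Phat h s a s') := by ring
            rw [this]
            refine le_trans (abs_add_le _ _) ?_
            rw [abs_mul, abs_mul, abs_of_nonneg ((hP h s a).1 s'),
              abs_of_nonneg (occ_nonneg d0 hd0 π hπ Phat hPhat h s a)]
        _ = (∑ s, ∑ a, |occ d0 π P h s a - occ d0 π Phat h s a|)
          + ∑ s, ∑ a, occ d0 π Phat h s a * (∑ s', |P h s a s' - Phat h s a s'|) := by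
            simp_rw [Finset.sum_add_distrib]
            congr 1
            · rw [Finset.sum_comm]
              refine Finset.sum_congr rfl fun s _ => ?_
              rw [Finset.sum_comm]
              refine Finset.sum_congr rfl fun a _ => ?_
              rw [← Finset.mul_sum, (hP h s a).2, mul_one]
            · rw [Finset.sum_comm]
              refine Finset.sum_congr rfl fun s _ => ?_
              rw [Finset.sum_comm]
              refine Finset.sum_congr rfl fun a _ => ?_
              rw [← Finset.mul_sum]
    exact le_trans key (by linarith)

/-- **Change of occupancy measure for total-variation errors.**
With `r_h(s,a) := ‖P_h(·|s,a) − P̂_h(·|s,a)‖_TV`, for every policy `π`: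
`Σ_{h<H} E_{d^π_{P;h}}[r_h] ≤ (2H+1) · Σ_{h<H} E_{d^π_{P̂;h}}[r_h]`. -/
theorem tv_change_of_measure (H : ℕ)
    (d0 : S → ℝ) (hd0 : IsDist d0)
    (P Phat : ℕ → S → Act → S → ℝ)
    (hP : ∀ h s a, IsDist (P h s a)) (hPhat : ∀ h s a, IsDist (Phat h s a))
    (π : ℕ → S → Act → ℝ) (hπ : ∀ h s, IsDist (π h s)) :
    ∑ h ∈ Finset.range H, ∑ s, ∑ a, occ d0 π P h s a *
        (∑ s', |P h s a s' - Phat h s a s'|)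
      ≤ (2 * (H : ℝ) + 1) *
        ∑ h ∈ Finset.range H, ∑ s, ∑ a, occ d0 π Phat h s a *
          (∑ s', |P h s a s' - Phat h s a s'|) := by
  set E : ℕ → ℝ := fun h => ∑ s, ∑ a, occ d0 π Phat h s a *
      (∑ s', |P h s a s' - Phat h s a s'|) with hE
  have hr2 : ∀ h (s : S) (a : Act), ∑ s', |P h s a s' - Phat h s a s'| ≤ 2 := by
    intro h s a
    calc ∑ s', |P h s a s' - Phat h s a s'|
        ≤ ∑ s', (P h s a s' + Phat h s a s') := by
          refine Finset.sum_le_sum fun s' _ => ?_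
          refine le_trans (abs_sub _ _) ?_
          rw [abs_of_nonneg ((hP h s a).1 s'), abs_of_nonneg ((hPhat h s a).1 s')]
      _ = 2 := by rw [Finset.sum_add_distrib, (hP h s a).2, (hPhat h s a).2]; norm_num
  have hrnn : ∀ h (s : S) (a : Act), (0:ℝ) ≤ ∑ s', |P h s a s' - Phat h s a s'| :=
    fun h s a => Finset.sum_nonneg fun s' _ => abs_nonneg _
  have hEnn : ∀ h, 0 ≤ E h := fun h => Finset.sum_nonneg fun s _ =>
    Finset.sum_nonneg fun a _ => mul_nonneg
      (occ_nonneg d0 hd0 π hπ Phat hPhat h s a) (hrnn h s a)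
  have hstep : ∀ h, ∑ s, ∑ a, occ d0 π P h s a * (∑ s', |P h s a s' - Phat h s a s'|)
      ≤ E h + 2 * ∑ g ∈ Finset.range h, E g := by
    intro h
    have h1 : ∑ s, ∑ a, occ d0 π P h s a * (∑ s', |P h s a s' - Phat h s a s'|)
        - E h ≤ 2 * ∑ s, ∑ a, |occ d0 π P h s a - occ d0 π Phat h s a| := by
      rw [hE]
      simp only [← Finset.sum_sub_distrib]
      rw [Finset.mul_sum]
      refine Finset.sum_le_sum fun s _ => ?_
      rw [Finset.mul_sum]
      refine Finset.sum_le_sum fun a _ => ?_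
      rw [← sub_mul]
      calc (occ d0 π P h s a - occ d0 π Phat h s a) * (∑ s', |P h s a s' - Phat h s a s'|)
          ≤ |occ d0 π P h s a - occ d0 π Phat h s a| * 2 := by
            refine mul_le_mul (le_abs_self _) (hr2 h s a) (hrnn h s a) (abs_nonneg _)
        _ = 2 * |occ d0 π P h s a - occ d0 π Phat h s a| := by ring
    have h2 := occ_l1 d0 hd0 π hπ P Phat hP hPhat h
    nlinarith [hEnn h]
  calc ∑ h ∈ Finset.range H, ∑ s, ∑ a, occ d0 π P h s a *
        (∑ s', |P h s a s' - Phat h s a s'|)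
      ≤ ∑ h ∈ Finset.range H, (E h + 2 * ∑ g ∈ Finset.range h, E g) :=
        Finset.sum_le_sum fun h _ => hstep h
    _ ≤ ∑ h ∈ Finset.range H, (E h + 2 * ∑ g ∈ Finset.range H, E g) := by
        refine Finset.sum_le_sum fun h hh => ?_
        have : ∑ g ∈ Finset.range h, E g ≤ ∑ g ∈ Finset.range H, E g :=
          Finset.sum_le_sum_of_subset_of_nonneg
            (Finset.range_subset_range.2 (le_of_lt (Finset.mem_range.1 hh)))
            (fun g _ _ => hEnn g)
        linarith
    _ = (2 * (H : ℝ) + 1) * ∑ h ∈ Finset.range H, E h := by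
        rw [Finset.sum_add_distrib, Finset.sum_const, Finset.card_range]
        ring
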